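/- For every integer N ≥ 4, the real sequence t_k := 1 − 4·(5/2)^{N−2}·(2/5)^{k−1} + 3·5^{N−2}·(1/5)^{k−1} (k ≥ 1), which is the impulse response of H^N(z) = 1/(z−1) − 4(5/2)^{N−2}/(z−0.4) + 3·5^{N−2}/(z−0.2), admits a positive realization of dimension N. -/
import Mathlib


open Matrix

/-- A positive realization of dimension `M` of a real sequence `t` (relevant for `k ≥ 1`):
a triple `(A, b, c)` with all entries nonnegative such that `t k = cᵀ A^(k-1) b` for `k ≥ 1`. -/
def IsPosRealization (M : ℕ) (A : Matrix (Fin M) (Fin M) ℝ)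
    (b c : Fin M → ℝ) (t : ℕ → ℝ) : Prop :=
  (∀ i j, 0 ≤ A i j) ∧ (∀ i, 0 ≤ b i) ∧ (∀ i, 0 ≤ c i) ∧
    ∀ k : ℕ, 1 ≤ k → t k = c ⬝ᵥ (A ^ (k - 1)).mulVec b

/-! ### Auxiliary material -/

/-- The impulse response sequence of `H^N`. -/
noncomputable def Tseq (N k : ℕ) : ℝ :=
  1 - 4 * (5 / 2 : ℝ) ^ (N - 2) * (2 / 5 : ℝ) ^ (k - 1)
    + 3 * (5 : ℝ) ^ (N - 2) * (1 / 5 : ℝ) ^ (k - 1)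

/-- Explicit positive realization matrix for `N = 4`. -/
noncomputable def A4 : Matrix (Fin 4) (Fin 4) ℝ :=
  !![0, 0, 0, 7/8;
     1, 0, 0, 1/16;
     0, 1, 11/15, 85/16;
     0, 0, 4/375, 3/4]

/-- Intertwining matrix: columns are the generators of the invariant cone. -/
noncomputable def V3 : Matrix (Fin 3) (Fin 4) ℝ :=
  !![1, 1,   1,    25;
     1, 2/5, 4/25, -5;
     1, 1/5, 1/25, -2]

/-- Diagonal (minimal) system matrix. -/
noncomputable def F3 : Matrix (Fin 3) (Fin 3) ℝ := Matrix.diagonal ![1, 2/5, 1/5]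

lemma V3_mul_A4 : V3 * A4 = F3 * V3 := by
  ext i j
  fin_cases i <;> fin_cases j <;>
    simp [V3, A4, F3, Matrix.mul_apply, Fin.sum_univ_four, Fin.sum_univ_three,
      Matrix.diagonal, Matrix.vecHead, Matrix.vecTail] <;> norm_num

lemma V3_mul_A4_pow (j : ℕ) : V3 * A4 ^ j = F3 ^ j * V3 := by
  induction j with
  | zero => simp
  | succ n ih =>
      calc V3 * A4 ^ (n + 1) = V3 * A4 ^ n * A4 := by rw [pow_succ, Matrix.mul_assoc]
      _ = F3 ^ n * V3 * A4 := by rw [ih]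
      _ = F3 ^ n * (V3 * A4) := by rw [Matrix.mul_assoc]
      _ = F3 ^ n * (F3 * V3) := by rw [V3_mul_A4]
      _ = F3 ^ (n + 1) * V3 := by rw [pow_succ, Matrix.mul_assoc]

lemma base_formula (j : ℕ) :
    (![51, 6, 0, 0] : Fin 4 → ℝ) ⬝ᵥ (A4 ^ j).mulVec ![1, 0, 0, 0]
      = 1 - 25 * (2/5 : ℝ) ^ j + 75 * (1/5 : ℝ) ^ j := by
  have hc : (![51, 6, 0, 0] : Fin 4 → ℝ) = (![1, -25, 75] : Fin 3 → ℝ) ᵥ* V3 := by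
    funext i
    fin_cases i <;>
      simp [V3, Matrix.vecMul, dotProduct, Fin.sum_univ_three] <;> norm_num
  have hb : V3.mulVec ![1, 0, 0, 0] = ![1, 1, 1] := by
    funext i
    fin_cases i <;>
      simp [V3, Matrix.mulVec, dotProduct, Fin.sum_univ_four]
  rw [hc, ← Matrix.dotProduct_mulVec, Matrix.mulVec_mulVec, V3_mul_A4_pow,
    ← Matrix.mulVec_mulVec, hb, F3, Matrix.diagonal_pow]
  have hd : (Matrix.diagonal ((![1, 2/5, 1/5] : Fin 3 → ℝ) ^ j)).mulVec ![1, 1, 1]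
      = ![(1:ℝ) ^ j, (2/5 : ℝ) ^ j, (1/5 : ℝ) ^ j] := by
    funext i
    rw [Matrix.mulVec_diagonal]
    fin_cases i <;> simp [Pi.pow_apply]
  rw [hd]
  simp [dotProduct, Fin.sum_univ_three]
  ring

/-- The block extension: add a new first state that feeds `b` into the old system. -/
noncomputable def extA {M : ℕ} (A : Matrix (Fin M) (Fin M) ℝ) (b : Fin M → ℝ) :
    Matrix (Fin (M + 1)) (Fin (M + 1)) ℝ :=
  Matrix.of (Fin.cases (0 : Fin (M + 1) → ℝ) (fun i' => Matrix.vecCons (b i') (A i')))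

lemma extA_mulVec {M : ℕ} (A : Matrix (Fin M) (Fin M) ℝ) (b : Fin M → ℝ)
    (x : ℝ) (v : Fin M → ℝ) :
    (extA A b).mulVec (Matrix.vecCons x v)
      = Matrix.vecCons 0 (x • b + A.mulVec v) := by
  funext i
  refine Fin.cases ?_ (fun i' => ?_) i
  · simp [Matrix.mulVec, extA]
  · simp [Matrix.mulVec, extA, Matrix.cons_dotProduct, mul_comm]

lemma extA_pow_mulVec {M : ℕ} (A : Matrix (Fin M) (Fin M) ℝ) (b : Fin M → ℝ) (j : ℕ) :
    ((extA A b) ^ (j + 1)).mulVec (Matrix.vecCons 1 0)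
      = Matrix.vecCons 0 ((A ^ j).mulVec b) := by
  induction j with
  | zero =>
      rw [pow_one, extA_mulVec]
      simp
  | succ n ih =>
      rw [pow_succ', ← Matrix.mulVec_mulVec, ih, extA_mulVec]
      simp [Matrix.mulVec_mulVec, ← pow_succ']

lemma Tseq_shift {N k : ℕ} (hN : 2 ≤ N) (hk : 2 ≤ k) :
    Tseq (N + 1) k = Tseq N (k - 1) := by
  simp only [Tseq]
  rw [show N + 1 - 2 = (N - 2) + 1 from by omega,
    show k - 1 - 1 = k - 2 from by omega,
    show k - 1 = (k - 2) + 1 from by omega]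
  ring

lemma Tseq_nonneg_one {N : ℕ} : 0 ≤ Tseq N 1 := by
  simp only [Tseq]
  rcases Nat.eq_zero_or_pos (N - 2) with h | h
  · rw [h]; norm_num
  · have hm : (5/2 : ℝ) ^ (N - 2) * 2 ^ (N - 2) = 5 ^ (N - 2) := by
      rw [← mul_pow]; norm_num
    have h2m : (2 : ℝ) ≤ 2 ^ (N - 2) := by
      calc (2 : ℝ) = 2 ^ 1 := (pow_one 2).symm
      _ ≤ 2 ^ (N - 2) := by
        apply pow_le_pow_right₀ (by norm_num) h
    have hx : (0 : ℝ) ≤ (5/2 : ℝ) ^ (N - 2) := by positivity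
    have hkey := mul_nonneg hx (by linarith : (0 : ℝ) ≤ 2 ^ (N - 2) - 2)
    norm_num
    nlinarith [hm, hkey]

/-- Main induction: for every `N ≥ 4` there are nonnegative `(A, b, c)` realizing `Tseq N`. -/
lemma exists_pos_realization_Tseq :
    ∀ N : ℕ, 4 ≤ N →
      ∃ (A : Matrix (Fin N) (Fin N) ℝ) (b c : Fin N → ℝ),
        (∀ i j, 0 ≤ A i j) ∧ (∀ i, 0 ≤ b i) ∧ (∀ i, 0 ≤ c i) ∧
          ∀ k : ℕ, 1 ≤ k → Tseq N k = c ⬝ᵥ (A ^ (k - 1)).mulVec b := by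
  refine Nat.le_induction ?_ ?_
  · -- base case N = 4
    refine ⟨A4, ![1, 0, 0, 0], ![51, 6, 0, 0], ?_, ?_, ?_, ?_⟩
    · intro i j
      fin_cases i <;> fin_cases j <;> norm_num [A4]
    · intro i; fin_cases i <;> norm_num
    · intro i; fin_cases i <;> norm_num
    · intro k hk
      rw [base_formula]
      simp only [Tseq]
      norm_num
  · -- induction step
    rintro N hN ⟨A, b, c, hA, hb, hc, hreal⟩
    refine ⟨extA A b, Matrix.vecCons 1 0, Matrix.vecCons (Tseq (N + 1) 1) c,
      ?_, ?_, ?_, ?_⟩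
    · intro i j
      refine Fin.cases ?_ (fun i' => ?_) i
      · simp [extA]
      · refine Fin.cases ?_ (fun j' => ?_) j
        · simpa [extA] using hb i'
        · simpa [extA] using hA i' j'
    · intro i
      refine Fin.cases ?_ (fun i' => ?_) i <;> simp
    · intro i
      refine Fin.cases ?_ (fun i' => ?_) i
      · simpa using Tseq_nonneg_one
      · simpa using hc i'
    · intro k hk
      rcases Nat.lt_or_ge k 2 with hk2 | hk2
      · -- k = 1
        interval_cases k
        simp
      · -- k ≥ 2
        have hk1 : k - 1 = (k - 2) + 1 := by omega
        rw [hk1, extA_pow_mulVec, Matrix.cons_dotProduct_cons]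
        have hr := hreal (k - 1) (by omega)
        have hk12 : k - 1 - 1 = k - 2 := by omega
        rw [hk12] at hr
        rw [Tseq_shift (by omega) hk2, hr]
        ring

/-- For every `N ≥ 4`, the impulse response
`t_k = 1 − 4(5/2)^{N−2}(2/5)^{k−1} + 3·5^{N−2}(1/5)^{k−1}` of
`H^N(z) = 1/(z−1) − 4(5/2)^{N−2}/(z−2/5) + 3·5^{N−2}/(z−1/5)` admits a positive
realization of dimension `N`. -/
theorem HN_has_N_dimensional_positive_realization
    (N : ℕ) (hN : 4 ≤ N) (t : ℕ → ℝ)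
    (ht : ∀ k : ℕ, 1 ≤ k →
      t k = 1 - 4 * (5 / 2 : ℝ) ^ (N - 2) * (2 / 5 : ℝ) ^ (k - 1)
              + 3 * (5 : ℝ) ^ (N - 2) * (1 / 5 : ℝ) ^ (k - 1)) :
    ∃ (A : Matrix (Fin N) (Fin N) ℝ) (b c : Fin N → ℝ),
      IsPosRealization N A b c t := by
  obtain ⟨A, b, c, hA, hb, hc, hreal⟩ := exists_pos_realization_Tseq N hN
  refine ⟨A, b, c, hA, hb, hc, fun k hk => ?_⟩
  rw [ht k hk]
  exact hreal k hk
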